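/- (Novikov separation, countable cover form) Let X be a Polish space and (A_n)_{n∈ℕ} a sequence of coanalytic subsets of X with ⋃_n A_n = X. Then there exist Borel sets B_n with B_n ⊆ A_n for every n and ⋃_n B_n = X. -/

import Mathlib

set_option linter.unusedSectionVars false
open MeasureTheory Set

namespace NovikovAux

/-- Cylinder determined by a finite list. -/
def cyl (l : List ℕ) : Set (ℕ → ℕ) := {y | ∀ i (h : i < l.length), y i = l[i]}

lemma cyl_nil : cyl ([] : List ℕ) = univ := by
  ext y; simp [cyl]

lemma cyl_prefix {l l' : List ℕ} (h : l <+: l') : cyl l' ⊆ cyl l := by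
  intro y hy i hi
  have := hy i (lt_of_lt_of_le hi h.length_le)
  rw [this, List.IsPrefix.getElem h hi]

lemma cyl_eq_iUnion (l : List ℕ) : cyl l = ⋃ k, cyl (l ++ [k]) := by
  apply Subset.antisymm
  · intro y hy
    refine mem_iUnion.2 ⟨y l.length, ?_⟩
    intro i hi
    rcases Nat.lt_succ_iff_lt_or_eq.1 (by simpa using hi) with h | h
    · rw [hy i h, List.getElem_append_left h]
    · subst h
      simp
  · exact iUnion_subset fun k => cyl_prefix ⟨[k], rfl⟩

variable {X : Type*} [TopologicalSpace X] [MeasurableSpace X]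

/-- The family `S` can be separated: Borel supersets with empty intersection. -/
def Sep (S : ℕ → Set X) : Prop :=
  ∃ D : ℕ → Set X, (∀ n, MeasurableSet (D n)) ∧ (∀ n, S n ⊆ D n) ∧ (⋂ n, D n) = ∅

/-- A family of finite sequences is bad if the corresponding images cannot be separated. -/
def Bad (f : ℕ → (ℕ → ℕ) → X) (σ : ℕ → List ℕ) : Prop :=
  ¬ Sep (fun n => f n '' cyl (σ n))

lemma extend_bad {f : ℕ → (ℕ → ℕ) → X} {σ : ℕ → List ℕ} (hσ : Bad f σ) (m : ℕ) :
    ∃ k, Bad f (Function.update σ m (σ m ++ [k])) := by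
  by_contra h
  push_neg at h
  simp only [Bad, not_not] at h
  choose D hDm hDsub hDempty using h
  apply hσ
  refine ⟨fun n => if n = m then ⋃ k, D k m else ⋂ k, D k n, ?_, ?_, ?_⟩
  · intro n
    by_cases hn : n = m <;> simp [hn] <;>
      [exact MeasurableSet.iUnion fun k => hDm k m; exact MeasurableSet.iInter fun k => hDm k n]
  · intro n
    by_cases hn : n = m
    · subst hn
      simp only [if_pos rfl]
      rw [cyl_eq_iUnion (σ n), image_iUnion]
      refine iUnion_subset fun k => subset_iUnion_of_subset k ?_
      have := hDsub k n
      simpa [Function.update_self] using this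
    · simp only [if_neg hn]
      refine subset_iInter fun k => ?_
      have := hDsub k n
      simp only [Function.update_of_ne hn] at this
      exact this
  · rw [eq_empty_iff_forall_notMem]
    intro x hx
    have hxm : x ∈ ⋃ k, D k m := by simpa using mem_iInter.1 hx m
    rcases mem_iUnion.1 hxm with ⟨k, hk⟩
    have : x ∈ ⋂ n, D k n := by
      refine mem_iInter.2 fun n => ?_
      by_cases hn : n = m
      · subst hn; exact hk
      · have := mem_iInter.1 hx n
        simp only [if_neg hn] at this
        exact mem_iInter.1 this k
    rw [hDempty k] at this
    exact this

open scoped Classical in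
/-- One step of the construction. -/
noncomputable def ext (f : ℕ → (ℕ → ℕ) → X) (σ : ℕ → List ℕ) (m : ℕ) : ℕ → List ℕ :=
  Function.update σ m (σ m ++
    [if h : ∃ k, Bad f (Function.update σ m (σ m ++ [k])) then h.choose else 0])

/-- The sequence of stages. -/
noncomputable def seq (f : ℕ → (ℕ → ℕ) → X) : ℕ → ℕ → List ℕ
  | 0 => fun _ => []
  | t + 1 => ext f (seq f t) (Nat.unpair t).1

lemma seq_prefix_succ (f : ℕ → (ℕ → ℕ) → X) (t n : ℕ) :
    seq f t n <+: seq f (t + 1) n := by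
  show seq f t n <+: ext f (seq f t) (Nat.unpair t).1 n
  unfold ext
  by_cases hn : n = (Nat.unpair t).1
  · subst hn; rw [Function.update_self]; exact ⟨_, rfl⟩
  · rw [Function.update_of_ne hn]

lemma seq_prefix (f : ℕ → (ℕ → ℕ) → X) {t t' : ℕ} (h : t ≤ t') (n : ℕ) :
    seq f t n <+: seq f t' n := by
  induction h with
  | refl => exact List.prefix_refl _
  | step h ih => exact List.IsPrefix.trans (by assumption) (seq_prefix_succ f _ n)

lemma bad_seq {f : ℕ → (ℕ → ℕ) → X} (h0 : Bad f (fun _ => [])) (t : ℕ) :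
    Bad f (seq f t) := by
  induction t with
  | zero => exact h0
  | succ t ih =>
    show Bad f (ext f (seq f t) (Nat.unpair t).1)
    unfold ext
    have h : ∃ k, Bad f (Function.update (seq f t) (Nat.unpair t).1
        (seq f t (Nat.unpair t).1 ++ [k])) := extend_bad ih (Nat.unpair t).1
    rw [dif_pos h]
    exact h.choose_spec

lemma length_seq_succ (f : ℕ → (ℕ → ℕ) → X) (t n : ℕ) :
    (seq f (t + 1) n).length =
      if n = (Nat.unpair t).1 then (seq f t n).length + 1 else (seq f t n).length := by
  show (ext f (seq f t) (Nat.unpair t).1 n).length = _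
  unfold ext
  by_cases hn : n = (Nat.unpair t).1
  · subst hn; simp
  · simp [Function.update_of_ne hn, hn]

lemma exists_stage (f : ℕ → (ℕ → ℕ) → X) (n L : ℕ) :
    ∃ t, L ≤ (seq f t n).length := by
  induction L with
  | zero => exact ⟨0, Nat.zero_le _⟩
  | succ L ih =>
    rcases ih with ⟨t, ht⟩
    refine ⟨Nat.pair n t + 1, ?_⟩
    have h1 : (seq f t n).length ≤ (seq f (Nat.pair n t) n).length :=
      (seq_prefix f (Nat.right_le_pair n t) n).length_le
    have h2 := length_seq_succ f (Nat.pair n t) n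
    rw [if_pos (by simp [Nat.unpair_pair])] at h2
    omega

/-- The limit point of the construction along coordinate `n`. -/
noncomputable def pt (f : ℕ → (ℕ → ℕ) → X) (n : ℕ) : ℕ → ℕ := fun i =>
  (seq f (exists_stage f n (i + 1)).choose n)[i]'(by
    have := (exists_stage f n (i + 1)).choose_spec; omega)

lemma pt_spec (f : ℕ → (ℕ → ℕ) → X) (n t i : ℕ) (h : i < (seq f t n).length) :
    (seq f t n)[i] = pt f n i := by
  have key : ∀ a b (_ : i < (seq f a n).length) (hb : i < (seq f b n).length),
      a ≤ b → (seq f a n)[i] = (seq f b n)[i]'hb := by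
    intro a b ha hb hab
    exact List.IsPrefix.getElem (seq_prefix f hab n) ha
  have hlt : i < (seq f (exists_stage f n (i + 1)).choose n).length := by
    have := (exists_stage f n (i + 1)).choose_spec; omega
  unfold pt
  rcases le_total t (exists_stage f n (i + 1)).choose with hle | hle
  · exact key t _ h hlt hle
  · exact (key _ t hlt h hle).symm

lemma cyl_agree {f : ℕ → (ℕ → ℕ) → X} {n t : ℕ} {y : ℕ → ℕ}
    (hy : y ∈ cyl (seq f t n)) {i : ℕ} (hi : i < (seq f t n).length) :
    y i = pt f n i :=
  (hy i hi).trans (pt_spec f n t i hi)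

lemma image_small {f : ℕ → (ℕ → ℕ) → X} {n : ℕ} (hf : Continuous (f n))
    {U : Set X} (hU : IsOpen U) (hxU : f n (pt f n) ∈ U) :
    ∃ t, f n '' cyl (seq f t n) ⊆ U := by
  have hV : IsOpen ((f n) ⁻¹' U) := hU.preimage hf
  rcases isOpen_pi_iff.1 hV (pt f n) hxU with ⟨I, u, hu, hsub⟩
  set L := I.sup id + 1 with hL
  rcases exists_stage f n L with ⟨t, ht⟩
  refine ⟨t, ?_⟩
  rintro _ ⟨y, hy, rfl⟩
  apply hsub
  intro a ha
  have haL : a < L := Nat.lt_succ_of_le (Finset.le_sup (f := id) ha)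
  have : y a = pt f n a := cyl_agree hy (lt_of_lt_of_le haL ht)
  rw [this]
  exact (hu a ha).2

end NovikovAux

open Set in
/-- Novikov separation, countable cover form: coanalytic sets covering X can be
shrunk to Borel sets still covering X. -/
theorem novikov_cover {X : Type*} [TopologicalSpace X] [PolishSpace X]
    [MeasurableSpace X] [BorelSpace X]
    (A : ℕ → Set X) (hA : ∀ n, AnalyticSet (A n)ᶜ)
    (hcover : (⋃ n, A n) = Set.univ) :
    ∃ B : ℕ → Set X, (∀ n, MeasurableSet (B n)) ∧ (∀ n, B n ⊆ A n) ∧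
      (⋃ n, B n) = Set.univ := by
  classical
  have hC : (⋂ n, (A n)ᶜ) = ∅ := by
    rw [← Set.compl_iUnion, hcover, Set.compl_univ]
  by_cases hsep : NovikovAux.Sep (fun n => (A n)ᶜ)
  · rcases hsep with ⟨D, hDm, hDs, hDe⟩
    refine ⟨fun n => (D n)ᶜ, fun n => (hDm n).compl, fun n => ?_, ?_⟩
    · rw [← compl_compl (A n)]
      exact compl_subset_compl.2 (hDs n)
    · rw [← Set.compl_iInter, hDe, Set.compl_empty]
  · exfalso
    have hne : ∀ n, ((A n)ᶜ : Set X) ≠ ∅ := by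
      intro n hn
      apply hsep
      refine ⟨fun m => if m = n then ∅ else univ, ?_, ?_, ?_⟩
      · intro m; by_cases h : m = n <;> simp [h]
      · intro m; by_cases h : m = n <;> simp [h, hn]
      · rw [eq_empty_iff_forall_notMem]
        intro x hx
        have := mem_iInter.1 hx n
        simp at this
    have hfn : ∀ n, ∃ f : (ℕ → ℕ) → X, Continuous f ∧ Set.range f = (A n)ᶜ := by
      intro n
      have h := hA n
      rw [MeasureTheory.AnalyticSet] at h
      exact h.resolve_left (hne n)
    choose f hfc hfr using hfn
    have h0 : NovikovAux.Bad f (fun _ => []) := by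
      intro hs
      apply hsep
      simpa [NovikovAux.cyl_nil, Set.image_univ, hfr] using hs
    set y : ℕ → X := fun n => f n (NovikovAux.pt f n) with hy_def
    have hy : ∀ n, y n ∈ (A n)ᶜ := fun n => (hfr n) ▸ Set.mem_range_self _
    have hneq : ∃ n m, y n ≠ y m := by
      by_contra h
      push_neg at h
      have : y 0 ∈ ⋂ n, (A n)ᶜ := Set.mem_iInter.2 fun n => (h 0 n) ▸ hy n
      rw [hC] at this
      exact this
    rcases hneq with ⟨n, m, hnm⟩
    have hnm' : n ≠ m := fun h => hnm (by rw [h])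
    rcases t2_separation hnm with ⟨U, V, hU, hV, hyU, hyV, hUV⟩
    rcases NovikovAux.image_small (hfc n) hU hyU with ⟨t1, ht1⟩
    rcases NovikovAux.image_small (hfc m) hV hyV with ⟨t2, ht2⟩
    have hVU : V ⊆ Uᶜ := fun x hx hx' => (Set.disjoint_iff.1 hUV) ⟨hx', hx⟩
    apply NovikovAux.bad_seq h0 (max t1 t2)
    refine ⟨fun j => if j = n then U else if j = m then Uᶜ else univ, ?_, ?_, ?_⟩
    · intro j
      by_cases h1 : j = n
      · simp [h1, hU.measurableSet]
      · by_cases h2 : j = m <;> simp [h1, h2, Ne.symm hnm', hU.measurableSet.compl]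
    · intro j
      by_cases h1 : j = n
      · subst h1
        simp only [if_pos rfl]
        exact (Set.image_mono
          (NovikovAux.cyl_prefix (NovikovAux.seq_prefix f (le_max_left t1 t2) j))).trans ht1
      · by_cases h2 : j = m
        · subst h2
          simp only [if_neg h1, if_pos rfl]
          exact ((Set.image_mono
            (NovikovAux.cyl_prefix (NovikovAux.seq_prefix f (le_max_right t1 t2) j))).trans
            ht2).trans hVU
        · simp [h1, h2]
    · rw [eq_empty_iff_forall_notMem]
      intro x hx
      have h1 := mem_iInter.1 hx n
      have h2 := mem_iInter.1 hx m
      rw [if_pos rfl] at h1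
      rw [if_neg (Ne.symm hnm'), if_pos rfl] at h2
      exact h2 h1
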